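/- For every finite-index normal subgroup N of B₃ contained in PB₃, the intersection N° of all objects of the connected component of N in the groupoid GTSh is an isolated object of GTSh; i.e., every GT-shadow with target N° has kernel exactly N°. -/

import Mathlib

def braidRel : Set (FreeGroup (Fin 2)) :=
  {FreeGroup.of 0 * FreeGroup.of 1 * FreeGroup.of 0 *
    (FreeGroup.of 1 * FreeGroup.of 0 * FreeGroup.of 1)⁻¹}

/-- The Artin braid group on 3 strands. -/
abbrev B3 := PresentedGroup braidRel

def σ₁ : B3 := PresentedGroup.of 0
def σ₂ : B3 := PresentedGroup.of 1

/-- The standard projection B₃ → S₃. -/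
def ρ : B3 →* Equiv.Perm (Fin 3) :=
  PresentedGroup.toGroup (f := ![Equiv.swap 0 1, Equiv.swap 1 2]) (by
    intro r hr
    simp only [braidRel, Set.mem_singleton_iff] at hr
    subst hr
    simp only [map_mul, map_inv, FreeGroup.lift_apply_of]
    decide)

/-- The pure braid group on 3 strands. -/
def PB3 : Subgroup B3 := ρ.ker

def c : B3 := (σ₁ * σ₂ * σ₁) ^ 2

abbrev F2 := FreeGroup (Fin 2)
def xx : F2 := FreeGroup.of 0
def yy : F2 := FreeGroup.of 1

/-- The identification of F₂ with ⟨σ₁², σ₂²⟩ ≤ PB₃. -/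
def ι : F2 →* B3 := FreeGroup.lift ![σ₁ ^ 2, σ₂ ^ 2]

/-- The pair (m, f) satisfies the two hexagon relations modulo N. -/
def Hex (N : Subgroup B3) [N.Normal] (m : ℤ) (f : F2) : Prop :=
  QuotientGroup.mk' N (σ₁ ^ (2 * m + 1) * (ι f)⁻¹ * σ₂ ^ (2 * m + 1) * ι f) =
      QuotientGroup.mk' N ((ι f)⁻¹ * σ₁ * σ₂ * (σ₁ ^ 2) ^ (-m) * c ^ m) ∧
  QuotientGroup.mk' N ((ι f)⁻¹ * σ₂ ^ (2 * m + 1) * ι f * σ₁ ^ (2 * m + 1)) =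
      QuotientGroup.mk' N (σ₂ * σ₁ * (σ₂ ^ 2) ^ (-m) * c ^ m * ι f)

/-- N_ord: the lcm of the orders of x₁₂N, x₂₃N and cN in B₃/N. -/
noncomputable def Nord (N : Subgroup B3) [N.Normal] : ℕ :=
  Nat.lcm
    (Nat.lcm (orderOf (QuotientGroup.mk' N (σ₁ ^ 2)))
      (orderOf (QuotientGroup.mk' N (σ₂ ^ 2))))
    (orderOf (QuotientGroup.mk' N c))

/-- The endomorphism E_{m,f} of F₂. -/
def Emap (m : ℤ) (f : F2) : F2 →* F2 :=
  FreeGroup.lift ![xx ^ (2 * m + 1), f⁻¹ * yy ^ (2 * m + 1) * f]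

/-- [m, f] is a GT-shadow with target N and kernel (source) K. -/
def IsShadow (K N : Subgroup B3) [N.Normal] (m : ℤ) (f : F2) : Prop :=
  Hex N m f ∧
  (∃ g ∈ commutator F2, g⁻¹ * f ∈ N.comap ι) ∧
  IsUnit ((2 * m + 1 : ℤ) : ZMod (Nord N)) ∧
  ∃ T : B3 →* B3 ⧸ N,
    T σ₁ = QuotientGroup.mk' N (σ₁ ^ (2 * m + 1)) ∧
    T σ₂ = QuotientGroup.mk' N ((ι f)⁻¹ * σ₂ ^ (2 * m + 1) * ι f) ∧
    Function.Surjective T ∧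
    T.ker = K

/-- [m, f] is a GT-shadow with target N (with unspecified source). -/
def IsShadowTgt (N : Subgroup B3) [N.Normal] (m : ℤ) (f : F2) : Prop :=
  ∃ K : Subgroup B3, IsShadow K N m f


section AuxGT

/-- The morphism relation of the groupoid GTSh (with explicit normality witness). -/
abbrev rGT (K' N' : Subgroup B3) : Prop :=
  ∃ h : N'.Normal, ∃ (m : ℤ) (f : F2), @IsShadow K' N' h m f

lemma rGT_normal_left {K N' : Subgroup B3} (h : rGT K N') : K.Normal := by
  obtain ⟨hN, m, f, -, -, -, T, -, -, -, hker⟩ := h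
  rw [← hker]
  infer_instance

lemma rGT_index {K N' : Subgroup B3} (h : rGT K N') : K.index = N'.index := by
  obtain ⟨hN, m, f, -, -, -, T, -, -, hTs, hker⟩ := h
  calc K.index = Nat.card T.range := by rw [← hker]; exact Subgroup.index_ker T
    _ = Nat.card (B3 ⧸ N') := by rw [MonoidHom.range_eq_top.mpr hTs]; exact Subgroup.card_top
    _ = N'.index := (Subgroup.index_eq_card N').symm

lemma eqv_facts {K M : Subgroup B3} (h : Relation.EqvGen rGT K M) :
    (K.Normal ↔ M.Normal) ∧ K.index = M.index := by
  induction h with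
  | rel a b hab => exact ⟨iff_of_true (rGT_normal_left hab) hab.1, rGT_index hab⟩
  | refl a => exact ⟨Iff.rfl, rfl⟩
  | symm a b _ ih => exact ⟨ih.1.symm, ih.2.symm⟩
  | trans a b c _ _ ih1 ih2 => exact ⟨ih1.1.trans ih2.1, ih1.2.trans ih2.2⟩

/-- Conjugation by an equivalence, as a homomorphism of permutation groups. -/
def permCongrHom {α β : Type*} (e : α ≃ β) : Equiv.Perm α →* Equiv.Perm β where
  toFun := e.permCongr
  map_one' := by ext x; simp
  map_mul' p q := by
    ext x; simp [Equiv.permCongr_apply, Equiv.Perm.mul_apply]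

lemma finite_hom_B3 (P : Type*) [Group P] [Finite P] : Finite (B3 →* P) := by
  have h1 : Function.Injective fun ψ : B3 →* P => ψ.comp (PresentedGroup.mk braidRel) :=
    fun ψ χ h => (MonoidHom.cancel_right (PresentedGroup.mk_surjective braidRel)).mp h
  have h2 : Function.Injective fun ψ : F2 →* P => fun i : Fin 2 => ψ (FreeGroup.of i) :=
    fun ψ χ h => FreeGroup.ext_hom _ _ fun a => congrFun h a
  exact Finite.of_injective _ (h2.comp h1)

lemma finite_index_set {G : Type*} [Group G] {n : ℕ} (hn : n ≠ 0)
    (hfin : Finite (G →* Equiv.Perm (Fin n))) :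
    {K : Subgroup G | K.index = n}.Finite := by
  have hz : 0 < n := Nat.pos_of_ne_zero hn
  set z : Fin n := ⟨0, hz⟩ with hzdef
  have hfun : ∀ K : {K : Subgroup G // K.index = n},
      ∃ φ : G →* Equiv.Perm (Fin n), ∀ g, g ∈ K.1 ↔ φ g z = z := by
    rintro ⟨K, hK⟩
    have hc : Nat.card (G ⧸ K) = n := by rw [← Subgroup.index_eq_card]; exact hK
    haveI : Finite (G ⧸ K) := (Nat.card_ne_zero.mp (by rw [hc]; exact hn)).2
    set e0 := Finite.equivFinOfCardEq hc with he0
    set e : (G ⧸ K) ≃ Fin n := e0.trans (Equiv.swap (e0 (QuotientGroup.mk (1 : G))) z) with he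
    have he1 : e (QuotientGroup.mk (1 : G)) = z := by
      simp [he, Equiv.swap_apply_left]
    have hs : e.symm z = QuotientGroup.mk (1 : G) := by
      rw [← he1, Equiv.symm_apply_apply]
    refine ⟨(permCongrHom e).comp (MulAction.toPermHom G (G ⧸ K)), fun g => ?_⟩
    have hval : ((permCongrHom e).comp (MulAction.toPermHom G (G ⧸ K))) g z
        = e (QuotientGroup.mk g) := by
      show e ((MulAction.toPerm g) (e.symm z)) = _
      rw [hs]
      show e (g • (QuotientGroup.mk (1 : G))) = _
      rw [MulAction.Quotient.smul_mk, smul_eq_mul, mul_one]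
    rw [hval, ← he1, Equiv.apply_eq_iff_eq, QuotientGroup.eq]
    simp
  choose F hF using hfun
  have hinj : Function.Injective F := by
    intro K K' h
    refine Subtype.ext (Subgroup.ext fun g => ?_)
    rw [hF K g, hF K' g, h]
  have : Finite {K : Subgroup G // K.index = n} := Finite.of_injective F hinj
  exact Set.finite_coe_iff.mp this

lemma push_shadow (D M : Subgroup B3) [hD : D.Normal] [hM : M.Normal] (hDM : D ≤ M)
    (m : ℤ) (f : F2) (T : B3 →* B3 ⧸ D)
    (hHex : Hex D m f)
    (hf : ∃ g ∈ commutator F2, g⁻¹ * f ∈ D.comap ι)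
    (hu : IsUnit ((2 * m + 1 : ℤ) : ZMod (Nord D)))
    (hT1 : T σ₁ = QuotientGroup.mk' D (σ₁ ^ (2 * m + 1)))
    (hT2 : T σ₂ = QuotientGroup.mk' D ((ι f)⁻¹ * σ₂ ^ (2 * m + 1) * ι f))
    (hTs : Function.Surjective T) :
    IsShadow ((QuotientGroup.map D M (MonoidHom.id B3) fun x hx => hDM hx).comp T).ker
      M m f := by
  set φ := QuotientGroup.map D M (MonoidHom.id B3) fun x hx => hDM hx with hφ
  have e : ∀ x : B3, φ (QuotientGroup.mk' D x) = QuotientGroup.mk' M x := fun x => rfl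
  have hφs : Function.Surjective φ := by
    intro q
    obtain ⟨x, rfl⟩ := QuotientGroup.mk'_surjective M q
    exact ⟨QuotientGroup.mk' D x, e x⟩
  refine ⟨⟨?_, ?_⟩, ?_, ?_, φ.comp T, ?_, ?_, hφs.comp hTs, rfl⟩
  · rw [← e, ← e, hHex.1]
  · rw [← e, ← e, hHex.2]
  · obtain ⟨g, hg, hmem⟩ := hf
    exact ⟨g, hg, Subgroup.comap_mono hDM hmem⟩
  · have key : ∀ x : B3,
        orderOf (QuotientGroup.mk' M x) ∣ orderOf (QuotientGroup.mk' D x) := by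
      intro x
      rw [← e x]
      exact orderOf_map_dvd φ _
    have hdvd : Nord M ∣ Nord D := by
      unfold Nord
      exact Nat.lcm_dvd
        (Nat.lcm_dvd
          ((key _).trans ((Nat.dvd_lcm_left _ _).trans (Nat.dvd_lcm_left _ _)))
          ((key _).trans ((Nat.dvd_lcm_right _ _).trans (Nat.dvd_lcm_left _ _))))
        ((key _).trans (Nat.dvd_lcm_right _ _))
    have := hu.map (ZMod.castHom hdvd (ZMod (Nord M)))
    rwa [map_intCast] at this
  · rw [MonoidHom.comp_apply, hT1]; exact e _
  · rw [MonoidHom.comp_apply, hT2]; exact e _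

end AuxGT

/-- For every object N of GTSh, the intersection N° of all objects of the connected
component of N is an isolated object: every GT-shadow with target N° has kernel
exactly N°. -/
theorem intersection_of_component_isolated (N D : Subgroup B3) [N.Normal] [D.Normal]
    (hNfin : N.FiniteIndex) (hNle : N ≤ PB3)
    (hD : D = sInf {K : Subgroup B3 |
      Relation.EqvGen
        (fun K' N' => ∃ h : N'.Normal, ∃ (m : ℤ) (f : F2), @IsShadow K' N' h m f)
        K N}) :
    ∀ (K : Subgroup B3) (m : ℤ) (f : F2), IsShadow K D m f → K = D := by
  intro K m f hKf
  have hD' : D = sInf {K : Subgroup B3 | Relation.EqvGen rGT K N} := hD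
  set S : Set (Subgroup B3) := {K : Subgroup B3 | Relation.EqvGen rGT K N} with hSdef
  have hNS : N ∈ S := Relation.EqvGen.refl N
  have hnorm : ∀ M ∈ S, M.Normal := fun M hM => (eqv_facts hM).1.mpr ‹N.Normal›
  have hidx : ∀ M ∈ S, M.index = N.index := fun M hM => (eqv_facts hM).2
  have hn0 : N.index ≠ 0 := hNfin.index_ne_zero
  have hSfin : S.Finite :=
    Set.Finite.subset (finite_index_set hn0 (finite_hom_B3 _)) fun M hM => hidx M hM
  have hDfin : D.index ≠ 0 := by
    haveI : Finite ↥S := hSfin.to_subtype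
    have hfi : (⨅ K : ↥S, (K : Subgroup B3)).FiniteIndex :=
      Subgroup.finiteIndex_iInf fun K => ⟨by rw [hidx K.1 K.2]; exact hn0⟩
    rw [hD', sInf_eq_iInf']
    exact hfi.index_ne_zero
  obtain ⟨hHex, hf, hu, T, hT1, hT2, hTs, hTk⟩ := hKf
  have hDK : D ≤ K := by
    intro x hx
    obtain ⟨g, hg⟩ := QuotientGroup.mk'_surjective D (T x)
    have hgM : ∀ M ∈ S, g ∈ M := by
      intro M hMS
      haveI hMn : M.Normal := hnorm M hMS
      have hDM : D ≤ M := hD'.le.trans (sInf_le hMS)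
      have hsh := push_shadow D M hDM m f T hHex hf hu hT1 hT2 hTs
      have hK'S :
          ((QuotientGroup.map D M (MonoidHom.id B3) fun y hy => hDM hy).comp T).ker ∈ S :=
        Relation.EqvGen.trans _ M N (Relation.EqvGen.rel _ _ ⟨hMn, m, f, hsh⟩) hMS
      have hxK' := (hD'.le.trans (sInf_le hK'S)) hx
      have h1 : (QuotientGroup.map D M (MonoidHom.id B3) fun y hy => hDM hy) (T x) = 1 := hxK'
      rw [← hg] at h1
      exact (QuotientGroup.eq_one_iff g).mp h1
    have hgD : g ∈ D := by rw [hD']; exact Subgroup.mem_sInf.mpr hgM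
    have hTx : T x = 1 := by rw [← hg]; exact (QuotientGroup.eq_one_iff g).mpr hgD
    rw [← hTk]
    exact hTx
  have hKidx : K.index = D.index := by
    rw [← hTk]
    calc T.ker.index = Nat.card T.range := Subgroup.index_ker T
      _ = Nat.card (B3 ⧸ D) := by rw [MonoidHom.range_eq_top.mpr hTs]; exact Subgroup.card_top
      _ = D.index := (Subgroup.index_eq_card D).symm
  have hrel := Subgroup.relIndex_mul_index hDK
  rw [hKidx] at hrel
  have h1 : D.relIndex K = 1 :=
    Nat.eq_of_mul_eq_mul_right (Nat.pos_of_ne_zero hDfin) (by rw [one_mul]; exact hrel)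
  exact le_antisymm (Subgroup.relIndex_eq_one.mp h1) hDK
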